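/- arXiv:1410.5076 — 4 statements merged into one kernel-verified Lean document; each statement's English description precedes it below -/
import Mathlib

section
/- Let f: X → ℝ be convex and differentiable on a convex set X ⊆ ℝⁿ, and let x̂ be a minimizer over X of the function x ↦ f(x) + ⟨x - x₀, p⟩ + ⟨x - x₀, g⟩ + τ‖x - x₀‖² with τ > 0, where x₀ ∈ X and p, g are fixed vectors. Then ⟨x̂ - x₀, ∇f(x₀) + p + g⟩ ≤ -τ‖x̂ - x₀‖². -/
open RealInnerProductSpace

/-- First-order optimality for the strongly convex surrogate: if `x̂` minimizes
`x ↦ f(x) + ⟨x-x₀,p⟩ + ⟨x-x₀,q⟩ + τ‖x-x₀‖²` over a convex set `X`, with `f`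
convex and differentiable, then `⟨x̂-x₀, ∇f(x₀)+p+q⟩ ≤ -τ‖x̂-x₀‖²`. -/
theorem stmt2 {n : ℕ} (X : Set (EuclideanSpace ℝ (Fin n)))
    (hX : Convex ℝ X) (f : EuclideanSpace ℝ (Fin n) → ℝ)
    (g : EuclideanSpace ℝ (Fin n) → EuclideanSpace ℝ (Fin n))
    (hconv : ConvexOn ℝ X f)
    (hg : ∀ x ∈ X, HasGradientAt f (g x) x)
    (x₀ : EuclideanSpace ℝ (Fin n)) (hx₀ : x₀ ∈ X)
    (p q : EuclideanSpace ℝ (Fin n)) (τ : ℝ) (hτ : 0 < τ)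
    (xhat : EuclideanSpace ℝ (Fin n)) (hxhat : xhat ∈ X)
    (hmin : IsMinOn (fun x => f x + ⟪x - x₀, p⟫ + ⟪x - x₀, q⟫ + τ * ‖x - x₀‖ ^ 2) X xhat) :
    ⟪xhat - x₀, g x₀ + p + q⟫ ≤ -τ * ‖xhat - x₀‖ ^ 2 := by
  set d := xhat - x₀ with hd
  -- Step 1: directional derivative bound from convexity: ⟪g x₀, d⟫ ≤ f xhat - f x₀
  have hfd : HasFDerivAt f ((InnerProductSpace.toDual ℝ _) (g x₀)) x₀ := hg x₀ hx₀
  have hline : HasDerivAt (fun t : ℝ => x₀ + t • d) d 0 := by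
    simpa using ((hasDerivAt_id (0:ℝ)).smul_const d).const_add x₀
  have hφ : HasDerivAt (fun t : ℝ => f (x₀ + t • d)) ⟪g x₀, d⟫ 0 := by
    have hfd2 : HasFDerivAt f ((InnerProductSpace.toDual ℝ _) (g x₀)) (x₀ + (0:ℝ) • d) := by simpa using hfd
    have h3 := hfd2.comp_hasDerivAt 0 hline
    simp at h3
    exact h3
  have hslope : Filter.Tendsto (slope (fun t : ℝ => f (x₀ + t • d)) 0) (nhdsWithin 0 {(0:ℝ)}ᶜ)
      (nhds ⟪g x₀, d⟫) := hasDerivAt_iff_tendsto_slope.mp hφ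
  have hslope' : Filter.Tendsto (slope (fun t : ℝ => f (x₀ + t • d)) 0)
      (nhdsWithin 0 (Set.Ioi 0)) (nhds ⟪g x₀, d⟫) :=
    hslope.mono_left (nhdsWithin_mono 0 (fun t ht => ne_of_gt ht))
  have hbound : ∀ t ∈ Set.Ioc (0:ℝ) 1,
      slope (fun t : ℝ => f (x₀ + t • d)) 0 t ≤ f xhat - f x₀ := by
    intro t ht
    have h1 : x₀ + t • d = (1 - t) • x₀ + t • xhat := by
      rw [hd]; module
    have h2 : f (x₀ + t • d) ≤ (1 - t) * f x₀ + t * f xhat := by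
      rw [h1]
      exact hconv.2 hx₀ hxhat (by linarith [ht.2]) (le_of_lt ht.1) (by ring)
    rw [slope_def_field]
    have : (f (x₀ + t • d) - f (x₀ + (0:ℝ) • d)) / (t - 0) ≤ f xhat - f x₀ := by
      rw [div_le_iff₀ (by simpa using ht.1)]
      simp only [zero_smul, add_zero]
      nlinarith [ht.1]
    simpa [div_sub_div_same] using this
  have hkey : ⟪g x₀, d⟫ ≤ f xhat - f x₀ := by
    refine le_of_tendsto hslope' ?_
    filter_upwards [Ioc_mem_nhdsGT_of_mem (Set.left_mem_Ico.mpr one_pos)] with t ht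
    exact hbound t ht
  -- Step 2: minimality at x₀
  have hmin0 := hmin hx₀
  simp only [sub_self, inner_zero_left, norm_zero] at hmin0
  have hmin0' : f xhat + ⟪d, p⟫ + ⟪d, q⟫ + τ * ‖d‖ ^ 2 ≤ f x₀ := by
    simpa [hd] using hmin0
  have hsym : ⟪g x₀, d⟫ = ⟪d, g x₀⟫ := real_inner_comm _ _
  have : ⟪d, g x₀ + p + q⟫ = ⟪d, g x₀⟫ + ⟪d, p⟫ + ⟪d, q⟫ := by
    simp [inner_add_right]
  rw [this]
  nlinarith [hkey, hmin0']
end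

section
/- Let U: ℝⁿ → ℝ be differentiable with L-Lipschitz gradient, and suppose x^{t+1} = x^t + γ(x̂^t - x^t) with γ ∈ (0,1], and ⟨x̂^t - x^t, f^t⟩ ≤ -τ‖x̂^t - x^t‖² for some vector f^t and τ > 0. Then U(x^{t+1}) ≤ U(x^t) - γ(τ - Lγ)‖x̂^t - x^t‖² + γ‖x̂^t - x^t‖·‖∇U(x^t) - f^t‖. -/
open RealInnerProductSpace

lemma descent_aux {E : Type*} [NormedAddCommGroup E] [InnerProductSpace ℝ E] [CompleteSpace E]
    (U : E → ℝ) (g : E → E) (L : ℝ) (hL : 0 ≤ L)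
    (hU : ∀ x, HasGradientAt U (g x) x)
    (hLip : LipschitzWith (Real.toNNReal L) g) (x v : E) :
    U (x + v) ≤ U x + ⟪v, g x⟫ + L * ‖v‖ ^ 2 := by
  set φ : ℝ → ℝ := fun t => U (x + t • v) - t * ⟪v, g x⟫ with hφ
  have hderiv : ∀ t ∈ Set.Icc (0:ℝ) 1,
      HasDerivWithinAt φ (⟪v, g (x + t • v)⟫ - ⟪v, g x⟫) (Set.Icc 0 1) t := by
    intro t _
    have hc : HasDerivAt (fun t : ℝ => x + t • v) v t := by
      simpa using ((hasDerivAt_id t).smul_const v).const_add x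
    have h1 : HasDerivAt (fun t : ℝ => U (x + t • v))
        ((InnerProductSpace.toDual ℝ E (g (x + t • v))) v) t :=
      (hU (x + t • v)).hasFDerivAt.comp_hasDerivAt t hc
    have h2 : HasDerivAt φ (⟪v, g (x + t • v)⟫ - ⟪v, g x⟫) t := by
      have := h1.sub ((hasDerivAt_id t).mul_const (⟪v, g x⟫))
      simpa [φ, InnerProductSpace.toDual_apply_apply, real_inner_comm, Pi.sub_def] using this
    exact h2.hasDerivWithinAt
  have hbound : ∀ t ∈ Set.Ico (0:ℝ) 1,
      ‖⟪v, g (x + t • v)⟫ - ⟪v, g x⟫‖ ≤ L * ‖v‖ ^ 2 := by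
    intro t ht
    have h1 : ⟪v, g (x + t • v)⟫ - ⟪v, g x⟫ = ⟪v, g (x + t • v) - g x⟫ := by
      rw [inner_sub_right]
    rw [h1]
    calc ‖⟪v, g (x + t • v) - g x⟫‖ ≤ ‖v‖ * ‖g (x + t • v) - g x‖ :=
          norm_inner_le_norm v _
      _ ≤ ‖v‖ * (L * ‖(x + t • v) - x‖) := by
          have := hLip.dist_le_mul (x + t • v) x
          rw [Real.coe_toNNReal L hL] at this
          rw [dist_eq_norm] at this
          exact mul_le_mul_of_nonneg_left (by simpa [dist_eq_norm] using this)
            (norm_nonneg v)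
      _ ≤ L * ‖v‖ ^ 2 := by
          have : ‖(x + t • v) - x‖ = |t| * ‖v‖ := by
            simp [add_sub_cancel_left, norm_smul, Real.norm_eq_abs]
          rw [this]
          have ht1 : |t| ≤ 1 := by
            rw [abs_of_nonneg ht.1]; exact ht.2.le
          nlinarith [mul_le_mul_of_nonneg_left ht1 (mul_nonneg hL (sq_nonneg ‖v‖)), sq_nonneg ‖v‖]
  have key := norm_image_sub_le_of_norm_deriv_le_segment' hderiv hbound 1
    (by norm_num : (1:ℝ) ∈ Set.Icc (0:ℝ) 1)
  have hφ1 : φ 1 = U (x + v) - ⟪v, g x⟫ := by simp [φ]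
  have hφ0 : φ 0 = U x := by simp [φ]
  rw [hφ1, hφ0] at key
  have := (abs_le.mp (by simpa [Real.norm_eq_abs] using key)).2
  linarith

/-- Descent-lemma estimate: if `∇U` is `L`-Lipschitz, `x⁺ = x + γ(x̂ - x)` with
`γ ∈ (0,1]` and `⟨x̂-x, f⟩ ≤ -τ‖x̂-x‖²`, then
`U(x⁺) ≤ U(x) - γ(τ - Lγ)‖x̂-x‖² + γ‖x̂-x‖‖∇U(x)-f‖`. -/
theorem stmt3 {n : ℕ} (U : EuclideanSpace ℝ (Fin n) → ℝ)
    (g : EuclideanSpace ℝ (Fin n) → EuclideanSpace ℝ (Fin n)) (L : ℝ) (hL : 0 ≤ L)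
    (hU : ∀ x, HasGradientAt U (g x) x)
    (hLip : LipschitzWith (Real.toNNReal L) g)
    (x xhat f : EuclideanSpace ℝ (Fin n)) (γ τ : ℝ)
    (hγ0 : 0 < γ) (hγ1 : γ ≤ 1) (hτ : 0 < τ)
    (hdesc : ⟪xhat - x, f⟫ ≤ -τ * ‖xhat - x‖ ^ 2) :
    U (x + γ • (xhat - x)) ≤
      U x - γ * (τ - L * γ) * ‖xhat - x‖ ^ 2 + γ * ‖xhat - x‖ * ‖g x - f‖ := by
  set w := xhat - x with hw
  have h1 := descent_aux U g L hL hU hLip x (γ • w)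
  have h2 : ⟪γ • w, g x⟫ = γ * ⟪w, g x⟫ := real_inner_smul_left w (g x) γ
  have h3 : ‖γ • w‖ ^ 2 = γ ^ 2 * ‖w‖ ^ 2 := by
    rw [norm_smul, Real.norm_eq_abs, mul_pow, sq_abs]
  rw [h2, h3] at h1
  have h4 : ⟪w, g x⟫ ≤ -τ * ‖w‖ ^ 2 + ‖w‖ * ‖g x - f‖ := by
    have : ⟪w, g x⟫ = ⟪w, f⟫ + ⟪w, g x - f⟫ := by
      rw [← inner_add_right]; congr 1; abel
    rw [this]
    have hCS : ⟪w, g x - f⟫ ≤ ‖w‖ * ‖g x - f‖ := real_inner_le_norm w _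
    linarith
  calc U (x + γ • w) ≤ U x + γ * ⟪w, g x⟫ + L * (γ ^ 2 * ‖w‖ ^ 2) := h1
    _ ≤ U x + γ * (-τ * ‖w‖ ^ 2 + ‖w‖ * ‖g x - f‖) + L * (γ ^ 2 * ‖w‖ ^ 2) := by
        nlinarith
    _ = U x - γ * (τ - L * γ) * ‖w‖ ^ 2 + γ * ‖w‖ * ‖g x - f‖ := by ring
end

section
/- Let {a_t} be a sequence of nonnegative reals such that lim inf_{t→∞} a_t = 0 and lim sup_{t→∞} a_t > 0. Then for any δ > 0 with 2δ < lim sup a_t, there exist infinitely many indices t such that a_t < δ and, for each such t, an index i_t > t with a_{i_t} > 2δ and δ ≤ a_n ≤ 2δ for all t < n < i_t. -/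
open Filter

/-- Crossing windows: if a nonnegative sequence has `lim inf = 0` (i.e. it is
frequently below every `ε > 0`) and is frequently above `2δ` (i.e. `2δ < lim sup`),
then there are infinitely many indices `t` with `a_t < δ`, a later index `i_t`
with `a_{i_t} > 2δ`, and all intermediate values trapped in `[δ, 2δ]`. -/
theorem stmt5 (a : ℕ → ℝ) (ha : ∀ t, 0 ≤ a t)
    (hliminf : ∀ ε > 0, ∃ᶠ t in atTop, a t < ε)
    (δ : ℝ) (hδ : 0 < δ) (hlimsup : ∃ᶠ t in atTop, 2 * δ < a t) :
    ∃ᶠ t in atTop, a t < δ ∧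
      ∃ i, t < i ∧ 2 * δ < a i ∧ ∀ n, t < n → n < i → δ ≤ a n ∧ a n ≤ 2 * δ := by
  classical
  rw [frequently_atTop]
  intro N
  obtain ⟨s, hsN, hsδ⟩ := frequently_atTop.1 (hliminf δ hδ) N
  obtain ⟨j, hjs, hj⟩ := frequently_atTop.1 hlimsup (s + 1)
  have hex : ∃ i, s < i ∧ 2 * δ < a i := ⟨j, hjs, hj⟩
  set i := Nat.find hex with hi_def
  obtain ⟨hsi, hi⟩ := Nat.find_spec hex
  -- minimality of i
  have himin : ∀ n, s < n → n < i → a n ≤ 2 * δ := by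
    intro n hsn hni
    by_contra h
    exact (Nat.find_min hex hni) ⟨hsn, lt_of_not_ge h⟩
  -- greatest t ≤ i - 1 with a t < δ
  set t := Nat.findGreatest (fun t => a t < δ) (i - 1) with ht_def
  have hsi1 : s ≤ i - 1 := Nat.le_sub_one_of_lt hsi
  have hst : s ≤ t := Nat.le_findGreatest hsi1 hsδ
  have htδ : a t < δ := Nat.findGreatest_spec (P := fun t => a t < δ) hsi1 hsδ
  have hti : t < i := lt_of_le_of_lt (Nat.findGreatest_le _)
    (Nat.sub_lt (Nat.pos_of_ne_zero (by omega)) one_pos)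
  refine ⟨t, hsN.trans hst, htδ, i, hti, hi, ?_⟩
  intro n htn hni
  have hn1 : n ≤ i - 1 := Nat.le_sub_one_of_lt hni
  have h1 : δ ≤ a n := le_of_not_gt (Nat.findGreatest_is_greatest (P := fun t => a t < δ) htn hn1)
  exact ⟨h1, himin n (lt_of_le_of_lt hst htn) hni⟩
end

section
/- Let X̄ be a Hermitian n×n matrix, Z a Hermitian k×k matrix (k ≤ n), τ > 0, P > 0, and Q = {X Hermitian PSD : tr(X) ≤ P}. Then the maximizer over Q of -τ‖X - X̄‖² - ⟨Z, X₁₁⟩ (X₁₁ the leading k×k block of X) is X(Z) = [ X̄ - (1/(2τ))(μ* I + diag(Z, 0)) ]⁺, where [·]⁺ denotes projection onto the PSD cone and μ* ≥ 0 satisfies the complementarity condition 0 ≤ μ* ⊥ tr(X(Z)) - P ≤ 0. -/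
open Matrix ComplexOrder

noncomputable def ip {n : ℕ} (A B : Matrix (Fin n) (Fin n) ℂ) : ℝ :=
  ((Aᴴ * B).trace).re

lemma ip_add_left {n : ℕ} (A B C : Matrix (Fin n) (Fin n) ℂ) :
    ip (A + B) C = ip A C + ip B C := by
  simp [ip, Matrix.conjTranspose_add, add_mul, Matrix.trace_add]

lemma ip_sub_left {n : ℕ} (A B C : Matrix (Fin n) (Fin n) ℂ) :
    ip (A - B) C = ip A C - ip B C := by
  simp [ip, Matrix.conjTranspose_sub, sub_mul, Matrix.trace_sub]

lemma ip_sub_right {n : ℕ} (A B C : Matrix (Fin n) (Fin n) ℂ) :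
    ip A (B - C) = ip A B - ip A C := by
  simp [ip, mul_sub, Matrix.trace_sub]

lemma ip_smul_left {n : ℕ} (r : ℝ) (A C : Matrix (Fin n) (Fin n) ℂ) :
    ip (r • A) C = r * ip A C := by
  simp [ip, Matrix.conjTranspose_smul, smul_mul_assoc, Matrix.trace_smul, Complex.smul_re]

lemma ip_neg_left {n : ℕ} (A C : Matrix (Fin n) (Fin n) ℂ) :
    ip (-A) C = - ip A C := by
  simp [ip, neg_mul]

lemma ip_comm {n : ℕ} (A B : Matrix (Fin n) (Fin n) ℂ) :
    ip A B = ip B A := by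
  have h : Bᴴ * A = (Aᴴ * B)ᴴ := by simp [Matrix.conjTranspose_mul]
  rw [ip, ip, h, Matrix.trace_conjTranspose]
  simp

lemma ip_one_left {n : ℕ} (X : Matrix (Fin n) (Fin n) ℂ) :
    ip 1 X = (X.trace).re := by
  simp [ip]

lemma ip_sq_expand {n : ℕ} (A B : Matrix (Fin n) (Fin n) ℂ) :
    ip (A - B) (A - B) = ip A A - 2 * ip B A + ip B B := by
  rw [ip_sub_left, ip_sub_right, ip_sub_right, ip_comm A B]
  ring

lemma sum_restrict {k n : ℕ} (hk : k ≤ n) (f : Fin n → ℂ)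
    (h0 : ∀ i : Fin n, k ≤ (i : ℕ) → f i = 0) :
    ∑ i, f i = ∑ i : Fin k, f (Fin.castLE hk i) := by
  classical
  have hmap : ∑ i : Fin k, f (Fin.castLE hk i)
      = ∑ i ∈ Finset.univ.map (Fin.castLEEmb hk), f i := by
    rw [Finset.sum_map]
    rfl
  rw [hmap]
  symm
  apply Finset.sum_subset (Finset.subset_univ _)
  intro x _ hx
  apply h0
  by_contra h
  push_neg at h
  exact hx (Finset.mem_map.mpr ⟨⟨x, h⟩, Finset.mem_univ _, rfl⟩)

lemma block_trace {n k : ℕ} (hk : k ≤ n)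
    (Z : Matrix (Fin k) (Fin k) ℂ)
    (Zfull : Matrix (Fin n) (Fin n) ℂ)
    (hZfull : Zfull = Matrix.of fun (i j : Fin n) =>
      if hi : (i : ℕ) < k then if hj : (j : ℕ) < k then Z ⟨i, hi⟩ ⟨j, hj⟩ else 0 else 0)
    (X : Matrix (Fin n) (Fin n) ℂ) :
    (Zᴴ * X.submatrix (Fin.castLE hk) (Fin.castLE hk)).trace = (Zfullᴴ * X).trace := by
  have L : (Zfullᴴ * X).trace = ∑ i : Fin n, ∑ j : Fin n, star (Zfull j i) * X j i := by
    simp [Matrix.trace, Matrix.diag, Matrix.mul_apply, Matrix.conjTranspose_apply]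
  have R : (Zᴴ * X.submatrix (Fin.castLE hk) (Fin.castLE hk)).trace
      = ∑ i : Fin k, ∑ j : Fin k, star (Z j i) * X (Fin.castLE hk j) (Fin.castLE hk i) := by
    simp [Matrix.trace, Matrix.diag, Matrix.mul_apply, Matrix.conjTranspose_apply,
      Matrix.submatrix_apply]
  rw [L, R]
  symm
  rw [sum_restrict hk _ (fun i hi => ?_)]
  · apply Finset.sum_congr rfl
    intro i _
    rw [sum_restrict hk _ (fun j hj => ?_)]
    · apply Finset.sum_congr rfl
      intro j _
      have hz : Zfull (Fin.castLE hk j) (Fin.castLE hk i) = Z j i := by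
        simp [hZfull]
      rw [hz]
    · simp [hZfull, Nat.not_lt.mpr hj]
  · apply Finset.sum_eq_zero
    intro j _
    simp [hZfull, Nat.not_lt.mpr hi]

/-- Lemma 2(i): the maximizer over `Q = {X ⪰ 0 : tr X ≤ P}` of
`-τ‖X - X̄‖² - ⟨Z, X₁₁⟩` is the PSD projection
`X(Z) = [X̄ - (1/(2τ))(μ* I + diag(Z,0))]⁺`, where `μ* ≥ 0` satisfies the
complementarity condition `0 ≤ μ* ⊥ tr(X(Z)) - P ≤ 0`.  The projection is
characterized as the Frobenius-nearest PSD matrix. -/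
theorem stmt8 {n k : ℕ} (hk : k ≤ n)
    (Xbar : Matrix (Fin n) (Fin n) ℂ) (hXbar : Xbar.IsHermitian)
    (Z : Matrix (Fin k) (Fin k) ℂ) (hZ : Z.IsHermitian)
    (τ P : ℝ) (hτ : 0 < τ) (hP : 0 < P)
    (μ : ℝ) (hμ : 0 ≤ μ)
    (Zfull : Matrix (Fin n) (Fin n) ℂ)
    (hZfull : Zfull = Matrix.of fun (i j : Fin n) =>
      if hi : (i : ℕ) < k then if hj : (j : ℕ) < k then Z ⟨i, hi⟩ ⟨j, hj⟩ else 0 else 0)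
    (M : Matrix (Fin n) (Fin n) ℂ)
    (hM : M = Xbar - (1 / (2 * τ)) • (μ • (1 : Matrix (Fin n) (Fin n) ℂ) + Zfull))
    (Xz : Matrix (Fin n) (Fin n) ℂ) (hXzPSD : Xz.PosSemidef)
    -- `Xz = [M]⁺`, the projection of `M` onto the PSD cone in Frobenius norm
    (hproj : IsMinOn (fun X : Matrix (Fin n) (Fin n) ℂ => (((X - M)ᴴ * (X - M)).trace).re)
      {X | X.PosSemidef} Xz)
    (htr : (Xz.trace).re ≤ P) (hcomp : μ * ((Xz.trace).re - P) = 0) :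
    IsMaxOn (fun X : Matrix (Fin n) (Fin n) ℂ =>
        -τ * (((X - Xbar)ᴴ * (X - Xbar)).trace).re
          - ((Zᴴ * X.submatrix (Fin.castLE hk) (Fin.castLE hk)).trace).re)
      {X | X.PosSemidef ∧ (X.trace).re ≤ P} Xz := by
  have hτ' : (2 * τ) ≠ 0 := by positivity
  -- D = M - Xbar
  set D : Matrix (Fin n) (Fin n) ℂ := M - Xbar with hDdef
  have hD : D = -((1 / (2 * τ)) • (μ • (1 : Matrix (Fin n) (Fin n) ℂ) + Zfull)) := by
    rw [hDdef, hM]; abel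
  have hDX : ∀ X : Matrix (Fin n) (Fin n) ℂ,
      ip D X = -(1 / (2 * τ)) * (μ * (X.trace).re + ip Zfull X) := by
    intro X
    rw [hD, ip_neg_left, ip_smul_left, ip_add_left, ip_smul_left, ip_one_left]
    ring
  set K : ℝ := 2 * τ * ip D Xbar + τ * ip D D with hK
  have key : ∀ X : Matrix (Fin n) (Fin n) ℂ,
      -τ * ip (X - Xbar) (X - Xbar) - ip Zfull X
        = -τ * ip (X - M) (X - M) + μ * (X.trace).re + K := by
    intro X
    have h1 : X - M = (X - Xbar) - D := by rw [hDdef]; abel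
    have h2 : ip D (X - Xbar) = ip D X - ip D Xbar := ip_sub_right _ _ _
    have h3 : ip ((X - Xbar) - D) ((X - Xbar) - D)
        = ip (X - Xbar) (X - Xbar) - 2 * ip D (X - Xbar) + ip D D := ip_sq_expand _ _
    rw [h1, h3, h2, hDX X, hK]
    field_simp
    ring
  have hblock : ∀ X : Matrix (Fin n) (Fin n) ℂ,
      ((Zᴴ * X.submatrix (Fin.castLE hk) (Fin.castLE hk)).trace).re = ip Zfull X := by
    intro X
    rw [block_trace hk Z Zfull hZfull X]; rfl
  intro X hX
  obtain ⟨hXpsd, hXtr⟩ := hX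
  have hmin : ip (Xz - M) (Xz - M) ≤ ip (X - M) (X - M) := hproj hXpsd
  simp only [Set.mem_setOf_eq]
  show -τ * (((X - Xbar)ᴴ * (X - Xbar)).trace).re
          - ((Zᴴ * X.submatrix (Fin.castLE hk) (Fin.castLE hk)).trace).re
      ≤ -τ * (((Xz - Xbar)ᴴ * (Xz - Xbar)).trace).re
          - ((Zᴴ * Xz.submatrix (Fin.castLE hk) (Fin.castLE hk)).trace).re
  have e1 : -τ * (((X - Xbar)ᴴ * (X - Xbar)).trace).re
          - ((Zᴴ * X.submatrix (Fin.castLE hk) (Fin.castLE hk)).trace).re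
      = -τ * ip (X - M) (X - M) + μ * (X.trace).re + K := by
    rw [hblock X]; exact key X
  have e2 : -τ * (((Xz - Xbar)ᴴ * (Xz - Xbar)).trace).re
          - ((Zᴴ * Xz.submatrix (Fin.castLE hk) (Fin.castLE hk)).trace).re
      = -τ * ip (Xz - M) (Xz - M) + μ * (Xz.trace).re + K := by
    rw [hblock Xz]; exact key Xz
  rw [e1, e2]
  have hμX : μ * (X.trace).re ≤ μ * P := mul_le_mul_of_nonneg_left hXtr hμ
  have hμz : μ * (Xz.trace).re = μ * P := by nlinarith [hcomp]
  nlinarith [hmin, hτ.le]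
end
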